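/- Let E be a finite-dimensional real inner product space, F a real vector space, and d : F → E, L : E → E linear maps such that L is symmetric (⟨L u, v⟩ = ⟨u, L v⟩ for all u, v ∈ E) and L ∘ d = 0. Then range(d) ⊆ ker L and range(L) ⊆ (range d)ᗮ, and the bilinear map (u, v) ↦ ⟨u, v⟩ descends to a well-defined nondegenerate bilinear pairing (ker L ⧸ range d) × ((range d)ᗮ ⧸ range L) → ℝ. -/
import Mathlib


open RealInnerProductSpace

/-- Finite-dimensional algebraic core of Proposition 2.2 of Branson–Gover:
if `L` is symmetric and `L ∘ d = 0` then `range d ⊆ ker L`,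
`range L ⊆ (range d)ᗮ`, and the inner product descends to a well-defined
nondegenerate bilinear pairing `(ker L ⧸ range d) × ((range d)ᗮ ⧸ range L) → ℝ`. -/
theorem stmt_1
    {E F : Type*} [NormedAddCommGroup E] [InnerProductSpace ℝ E]
    [FiniteDimensional ℝ E] [AddCommGroup F] [Module ℝ F]
    (d : F →ₗ[ℝ] E) (L : E →ₗ[ℝ] E)
    (hsym : ∀ u v : E, ⟪L u, v⟫ = ⟪u, L v⟫)
    (hLd : L ∘ₗ d = 0) :
    LinearMap.range d ≤ LinearMap.ker L ∧
    LinearMap.range L ≤ (LinearMap.range d)ᗮ ∧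
    ∃ B : (↥(LinearMap.ker L) ⧸
            (LinearMap.range d).comap (LinearMap.ker L).subtype) →ₗ[ℝ]
          (↥((LinearMap.range d)ᗮ) ⧸
            (LinearMap.range L).comap ((LinearMap.range d)ᗮ).subtype) →ₗ[ℝ] ℝ,
      (∀ (u : ↥(LinearMap.ker L)) (v : ↥((LinearMap.range d)ᗮ)),
          B (Submodule.Quotient.mk u) (Submodule.Quotient.mk v) = ⟪(u : E), (v : E)⟫) ∧
      (∀ x, (∀ y, B x y = 0) → x = 0) ∧
      (∀ y, (∀ x, B x y = 0) → y = 0) := by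
  have hrd : LinearMap.range d ≤ LinearMap.ker L := by
    rintro x ⟨w, rfl⟩
    simp only [LinearMap.mem_ker]
    have := congrFun (congrArg (fun f => f.toFun) hLd) w
    simpa using this
  -- ker L = (range L)ᗮ
  have hker : LinearMap.ker L = (LinearMap.range L)ᗮ := by
    ext u
    constructor
    · intro hu
      intro x hx
      rcases hx with ⟨w, rfl⟩
      rw [hsym w u]
      simp [LinearMap.mem_ker.mp hu]
    · intro hu
      have h0 : ⟪L u, L u⟫ = 0 := by
        rw [hsym]
        rw [real_inner_comm]; exact hu (L (L u)) ⟨L u, rfl⟩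
      exact LinearMap.mem_ker.mpr (inner_self_eq_zero.mp h0)
  have hrL : LinearMap.range L ≤ (LinearMap.range d)ᗮ := by
    rintro x ⟨u, rfl⟩
    intro y hy
    rcases hy with ⟨w, rfl⟩
    have hdw : L (d w) = 0 := LinearMap.mem_ker.mp (hrd ⟨w, rfl⟩)
    rw [← hsym (d w) u, hdw, inner_zero_left]
  refine ⟨hrd, hrL, ?_⟩
  set S := LinearMap.ker L
  set V := (LinearMap.range d)ᗮ
  set W1 := (LinearMap.range d).comap S.subtype
  set W2 := (LinearMap.range L).comap V.subtype
  -- bilinear map on S × V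
  let b : ↥S →ₗ[ℝ] ↥V →ₗ[ℝ] ℝ :=
    LinearMap.mk₂ ℝ (fun u v => ⟪(u : E), (v : E)⟫)
      (fun u u' v => by simp [inner_add_left])
      (fun c u v => by simp [inner_smul_left])
      (fun u v v' => by simp [inner_add_right])
      (fun c u v => by simp [inner_smul_right])
  have hflip : W2 ≤ LinearMap.ker b.flip := by
    rintro v hv
    have hv' : (v : E) ∈ LinearMap.range L := hv
    rcases hv' with ⟨w, hw⟩
    ext u
    simp only [LinearMap.flip_apply, LinearMap.mk₂_apply, b, LinearMap.zero_apply]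
    have hu0 : L (u : E) = 0 := u.2
    rw [← hw, ← hsym (u : E) w, hu0, inner_zero_left]
  let b1 : (↥V ⧸ W2) →ₗ[ℝ] ↥S →ₗ[ℝ] ℝ := W2.liftQ b.flip hflip
  have hlift : W1 ≤ LinearMap.ker b1.flip := by
    rintro u hu
    have hu' : (u : E) ∈ LinearMap.range d := hu
    ext v
    simp only [LinearMap.flip_apply, LinearMap.zero_apply, b1, Submodule.liftQ_apply,
      LinearMap.mk₂_apply, b]
    exact v.2 _ hu'
  refine ⟨W1.liftQ b1.flip hlift, ?_, ?_, ?_⟩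
  · intro u v
    simp [b1, b]
  · intro x hx
    induction x using Submodule.Quotient.induction_on with
    | H u =>
      rw [Submodule.Quotient.mk_eq_zero]
      show (u : E) ∈ LinearMap.range d
      have hmem : (u : E) ∈ Vᗮ := by
        intro y hy
        have := hx (Submodule.Quotient.mk ⟨y, hy⟩)
        simp only [Submodule.liftQ_apply, LinearMap.flip_apply, b1, b,
          LinearMap.mk₂_apply] at this
        rw [real_inner_comm]
        exact this
      rwa [Submodule.orthogonal_orthogonal] at hmem
  · intro y hy
    induction y using Submodule.Quotient.induction_on with
    | H v =>
      rw [Submodule.Quotient.mk_eq_zero]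
      show (v : E) ∈ LinearMap.range L
      have hmem : (v : E) ∈ Sᗮ := by
        intro y hy'
        have := hy (Submodule.Quotient.mk ⟨y, hy'⟩)
        simp only [Submodule.liftQ_apply, LinearMap.flip_apply, b1, b,
          LinearMap.mk₂_apply] at this
        exact this
      rw [show S = (LinearMap.range L)ᗮ from hker,
        Submodule.orthogonal_orthogonal] at hmem
      exact hmem
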